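/- For real c > 0, h > 0, T > 0 and integers n > m, the contour integral (h/2π) ∫_{-π/h}^{π/h} e^{ik(n-m)h} e^{-W(k)T} dk, where W(k) = c(1 - e^{ikh})/h, equals 0. -/

import Mathlib

open Complex MeasureTheory

theorem stmt1 (c h T : ℝ) (hc : 0 < c) (hh : 0 < h) (hT : 0 < T)
    (n m : ℤ) (hnm : m < n) :
    ((h : ℂ) / (2 * Real.pi)) *
      ∫ k in (-Real.pi / h)..(Real.pi / h),
        Complex.exp (Complex.I * k * ((n : ℂ) - m) * h) *
          Complex.exp (-(c * (1 - Complex.exp (Complex.I * k * h)) / h) * T)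
    = 0 := by
  set a : ℝ := c * T / h with ha
  have hapos : 0 < a := by positivity
  set N : ℤ := n - m with hN
  have hN1 : 1 ≤ N := by omega
  set F : ℕ → ℝ → ℂ := fun j k =>
    Complex.exp (-(a : ℂ)) * Complex.exp (Complex.I * k * ((n : ℂ) - m) * h) *
      (((a : ℂ) * Complex.exp (Complex.I * k * h)) ^ j / j.factorial) with hF
  have hsum_pt : ∀ k : ℝ, HasSum (fun j => F j k)
      (Complex.exp (Complex.I * k * ((n : ℂ) - m) * h) *
        Complex.exp (-(c * (1 - Complex.exp (Complex.I * k * h)) / h) * T)) := by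
    intro k
    have h1 := (NormedSpace.expSeries_div_hasSum_exp
      ((a : ℂ) * Complex.exp (Complex.I * k * h))).mul_left
      (Complex.exp (-(a : ℂ)) * Complex.exp (Complex.I * k * ((n : ℂ) - m) * h))
    have h2 : Complex.exp (-(a : ℂ)) * Complex.exp (Complex.I * k * ((n : ℂ) - m) * h) *
        NormedSpace.exp ((a : ℂ) * Complex.exp (Complex.I * k * h)) =
        Complex.exp (Complex.I * k * ((n : ℂ) - m) * h) *
          Complex.exp (-(c * (1 - Complex.exp (Complex.I * k * h)) / h) * T) := by
      rw [← Complex.exp_eq_exp_ℂ, mul_comm (Complex.exp (-(a:ℂ))),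
        mul_assoc, ← Complex.exp_add]
      congr 2
      have hh' : (h : ℂ) ≠ 0 := Complex.ofReal_ne_zero.mpr hh.ne'
      push_cast [ha]
      field_simp
      ring
    rw [h2] at h1
    exact h1
  have hintF : ∀ j : ℕ, (∫ k in (-Real.pi / h)..(Real.pi / h), F j k) = 0 := by
    intro j
    have hh' : (h : ℂ) ≠ 0 := Complex.ofReal_ne_zero.mpr hh.ne'
    have hNj : ((N : ℂ) + j) ≠ 0 := by
      have : ((N + (j : ℤ) : ℤ) : ℂ) ≠ 0 := Int.cast_ne_zero.mpr (by omega)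
      push_cast at this
      exact this
    set c0 : ℂ := Complex.I * ((N : ℂ) + j) * h with hc0
    have hc0ne : c0 ≠ 0 := by
      simp [hc0, hNj, hh', Complex.I_ne_zero]
    have hrw : ∀ k : ℝ, F j k =
        (Complex.exp (-(a : ℂ)) * ((a : ℂ) ^ j / j.factorial)) * Complex.exp (c0 * k) := by
      intro k
      have hE : Complex.exp (Complex.I * k * ((n:ℂ) - m) * h) *
          Complex.exp (Complex.I * k * h) ^ j = Complex.exp (c0 * k) := by
        rw [← Complex.exp_nat_mul, ← Complex.exp_add, hc0]
        congr 1
        push_cast [hN]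
        ring
      simp only [hF, mul_pow]
      rw [← hE]
      ring
    simp_rw [hrw]
    rw [intervalIntegral.integral_const_mul, integral_exp_mul_complex hc0ne]
    have hpi : c0 * ((Real.pi : ℂ) / h) = ((N : ℂ) + j) * Real.pi * Complex.I := by
      rw [hc0]; field_simp
    have hpi' : c0 * ((-Real.pi : ℂ) / h) = -(((N : ℂ) + j) * Real.pi * Complex.I) := by
      rw [hc0]; field_simp
    have : Complex.exp (c0 * ((Real.pi : ℂ) / h)) = Complex.exp (c0 * ((-Real.pi : ℂ) / h)) := by
      rw [hpi, hpi', Complex.exp_eq_exp_iff_exists_int]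
      refine ⟨N + j, ?_⟩
      push_cast
      ring
    rw [show ((-Real.pi / h : ℝ) : ℂ) = (-Real.pi : ℂ) / h by push_cast; ring,
      show ((Real.pi / h : ℝ) : ℂ) = (Real.pi : ℂ) / h by push_cast; ring] at *
    rw [this]
    simp
  have key : HasSum (fun j => ∫ k in (-Real.pi / h)..(Real.pi / h), F j k)
      (∫ k in (-Real.pi / h)..(Real.pi / h),
        Complex.exp (Complex.I * k * ((n : ℂ) - m) * h) *
          Complex.exp (-(c * (1 - Complex.exp (Complex.I * k * h)) / h) * T)) := by
    apply intervalIntegral.hasSum_integral_of_dominated_convergence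
      (fun j _ => Real.exp (-a) * (a ^ j / j.factorial))
    · intro j
      apply Continuous.aestronglyMeasurable
      fun_prop
    · intro j
      filter_upwards with t ht
      have e1 : ‖Complex.exp (-(a : ℂ))‖ = Real.exp (-a) := by
        rw [Complex.norm_exp]; norm_num
      have e2 : ‖Complex.exp (Complex.I * t * ((n : ℂ) - m) * h)‖ = 1 := by
        rw [Complex.norm_exp]
        have : (Complex.I * t * ((n : ℂ) - m) * h).re = 0 := by
          simp [Complex.mul_re, Complex.mul_im]
        rw [this, Real.exp_zero]
      have e3 : ‖(((a : ℂ) * Complex.exp (Complex.I * t * h)) ^ j / (j.factorial : ℂ))‖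
          = a ^ j / j.factorial := by
        rw [norm_div, norm_pow, norm_mul, Complex.norm_exp]
        have : (Complex.I * t * h).re = 0 := by
          simp [Complex.mul_re, Complex.mul_im]
        rw [this, Real.exp_zero, mul_one]
        simp [abs_of_pos hapos, Nat.cast_pos.mpr j.factorial_pos,
          abs_of_nonneg (Nat.cast_nonneg (α := ℝ) j.factorial)]
      have : ‖F j t‖ = Real.exp (-a) * (a ^ j / j.factorial) := by
        simp only [hF]
        rw [norm_mul, norm_mul, e1, e2, e3, mul_one]
      rw [this]
    · filter_upwards with t ht
      exact (Real.summable_pow_div_factorial a).mul_left _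
    · apply intervalIntegrable_const
    · filter_upwards with t ht
      exact hsum_pt t
  simp_rw [hintF] at key
  have : (∫ k in (-Real.pi / h)..(Real.pi / h),
        Complex.exp (Complex.I * k * ((n : ℂ) - m) * h) *
          Complex.exp (-(c * (1 - Complex.exp (Complex.I * k * h)) / h) * T)) = 0 :=
    (hasSum_zero.unique key).symm
  rw [this, mul_zero]
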